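/- For circular Nim CN(6,3) (six stacks in a circle, each move removes at least one token total from three consecutive stacks), the set of P-positions is exactly {(a,b,c,d,e,f) : a+b = d+e and b+c = e+f}. -/
import Mathlib


/-- A legal move in SetNim: at least one stack strictly decreases, all changed
stacks lie in some allowed move set, stacks weakly decrease. -/
def Move {V : Type} (A : Set (Set V)) (p q : V → ℕ) : Prop :=
  q ≠ p ∧ (∀ i, q i ≤ p i) ∧ ∃ a ∈ A, ∀ i, q i ≠ p i → i ∈ a

/-- P-positions: positions all of whose options are N-positions. -/
def PPos {V : Type} [Fintype V] (A : Set (Set V)) (p : V → ℕ) : Prop :=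
  ∀ q, Move A p q → ¬ PPos A q
termination_by Finset.univ.sum p
decreasing_by
  rename_i hq
  obtain ⟨hne, hle, -⟩ := hq
  refine Finset.sum_lt_sum (fun i _ => hle i) ?_
  obtain ⟨i, hi⟩ := Function.ne_iff.mp hne
  exact ⟨i, Finset.mem_univ i, lt_of_le_of_ne (hle i) hi⟩


/-- Move sets of circular Nim CN(6,3): three consecutive stacks. -/
def CN63 : Set (Set (Fin 6)) := {s | ∃ i : Fin 6, s = {i, i + 1, i + 2}}

private lemma winMove (a b c d e f : ℕ)
    (h1 : d + e ≤ a + b) (h2 : e + f ≤ b + c)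
    (h3 : d + e < a + b ∨ e + f < b + c)
    (h4 : d ≤ a + f) (h5 : f ≤ c + d) :
    ∃ a' b' c', a' ≤ a ∧ b' ≤ b ∧ c' ≤ c ∧ (a' ≠ a ∨ b' ≠ b ∨ c' ≠ c) ∧
      a' + b' = d + e ∧ b' + c' = e + f := by
  refine ⟨a - (a + b - (d + e) - min (a + b - (d + e)) (min (b + c - (e + f)) b)),
    b - min (a + b - (d + e)) (min (b + c - (e + f)) b),
    c - (b + c - (e + f) - min (a + b - (d + e)) (min (b + c - (e + f)) b)),
    ?_, ?_, ?_, ?_, ?_, ?_⟩ <;> omega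

private lemma move_sum_lt {V : Type} [Fintype V] {A : Set (Set V)} {p q : V → ℕ}
    (h : Move A p q) : Finset.univ.sum q < Finset.univ.sum p := by
  obtain ⟨hne, hle, -⟩ := h
  refine Finset.sum_lt_sum (fun i _ => hle i) ?_
  obtain ⟨i, hi⟩ := Function.ne_iff.mp hne
  exact ⟨i, Finset.mem_univ i, lt_of_le_of_ne (hle i) hi⟩

private lemma mkMove (p : Fin 6 → ℕ) (i : Fin 6) (a' b' c' : ℕ)
    (h0 : a' ≤ p i) (h1 : b' ≤ p (i + 1)) (h2 : c' ≤ p (i + 2))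
    (hne : a' ≠ p i ∨ b' ≠ p (i + 1) ∨ c' ≠ p (i + 2)) :
    Move CN63 p
      (fun j => if j = i then a' else if j = i + 1 then b' else if j = i + 2 then c' else p j) := by
  have d1 : ∀ k : Fin 6, k + 1 ≠ k := by decide
  have d2 : ∀ k : Fin 6, k + 2 ≠ k := by decide
  have d3 : ∀ k : Fin 6, k + 2 ≠ k + 1 := by decide
  refine ⟨?_, ?_, {i, i + 1, i + 2}, ⟨i, rfl⟩, ?_⟩
  · intro hqp
    have hi := congrFun hqp i
    have hi1 := congrFun hqp (i + 1)
    have hi2 := congrFun hqp (i + 2)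
    simp only [if_pos rfl] at hi
    rw [if_neg (d1 i), if_pos rfl] at hi1
    rw [if_neg (d2 i), if_neg (d3 i), if_pos rfl] at hi2
    tauto
  · intro j
    by_cases e1 : j = i
    · subst e1; simpa using h0
    · by_cases e2 : j = i + 1
      · subst e2; simp only [if_neg (d1 i), if_pos rfl]; exact h1
      · by_cases e3 : j = i + 2
        · subst e3; simp only [if_neg (d2 i), if_neg (d3 i), if_pos rfl]; exact h2
        · simp only [if_neg e1, if_neg e2, if_neg e3]; exact le_rfl
  · intro j hj
    by_cases e1 : j = i
    · exact Or.inl e1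
    · by_cases e2 : j = i + 1
      · exact Or.inr (Or.inl e2)
      · by_cases e3 : j = i + 2
        · exact Or.inr (Or.inr e3)
        · simp only [if_neg e1, if_neg e2, if_neg e3, ne_eq, not_true_eq_false] at hj

private lemma goodWindow {p : Fin 6 → ℕ}
    (h : ¬ (p 0 + p 1 = p 3 + p 4 ∧ p 1 + p 2 = p 4 + p 5)) :
    (p 3 + p 4 ≤ p 0 + p 1 ∧ p 4 + p 5 ≤ p 1 + p 2 ∧ (p 3 + p 4 < p 0 + p 1 ∨ p 4 + p 5 < p 1 + p 2) ∧ p 3 ≤ p 0 + p 5 ∧ p 5 ≤ p 2 + p 3) ∨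
      (p 4 + p 5 ≤ p 1 + p 2 ∧ p 5 + p 0 ≤ p 2 + p 3 ∧ (p 4 + p 5 < p 1 + p 2 ∨ p 5 + p 0 < p 2 + p 3) ∧ p 4 ≤ p 1 + p 0 ∧ p 0 ≤ p 3 + p 4) ∨
      (p 5 + p 0 ≤ p 2 + p 3 ∧ p 0 + p 1 ≤ p 3 + p 4 ∧ (p 5 + p 0 < p 2 + p 3 ∨ p 0 + p 1 < p 3 + p 4) ∧ p 5 ≤ p 2 + p 1 ∧ p 1 ≤ p 4 + p 5) ∨
      (p 0 + p 1 ≤ p 3 + p 4 ∧ p 1 + p 2 ≤ p 4 + p 5 ∧ (p 0 + p 1 < p 3 + p 4 ∨ p 1 + p 2 < p 4 + p 5) ∧ p 0 ≤ p 3 + p 2 ∧ p 2 ≤ p 5 + p 0) ∨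
      (p 1 + p 2 ≤ p 4 + p 5 ∧ p 2 + p 3 ≤ p 5 + p 0 ∧ (p 1 + p 2 < p 4 + p 5 ∨ p 2 + p 3 < p 5 + p 0) ∧ p 1 ≤ p 4 + p 3 ∧ p 3 ≤ p 0 + p 1) ∨
      (p 2 + p 3 ≤ p 5 + p 0 ∧ p 3 + p 4 ≤ p 0 + p 1 ∧ (p 2 + p 3 < p 5 + p 0 ∨ p 3 + p 4 < p 0 + p 1) ∧ p 2 ≤ p 5 + p 4 ∧ p 4 ≤ p 1 + p 2) := by
  rw [not_and_or] at h
  rcases h with h | h <;> omega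

private lemma existsWin {p : Fin 6 → ℕ}
    (h : ¬ (p 0 + p 1 = p 3 + p 4 ∧ p 1 + p 2 = p 4 + p 5)) :
    ∃ q, Move CN63 p q ∧ (q 0 + q 1 = q 3 + q 4 ∧ q 1 + q 2 = q 4 + q 5) := by
  rcases goodWindow h with hd | hd | hd | hd | hd | hd
  · obtain ⟨a', b', c', ha, hb, hc, hne, s1, s2⟩ :=
      winMove (p 0) (p 1) (p 2) (p 3) (p 4) (p 5)
        hd.1 hd.2.1 hd.2.2.1 hd.2.2.2.1 hd.2.2.2.2
    refine ⟨_, mkMove p 0 a' b' c' ha hb hc hne, ?_, ?_⟩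
    · show a' + b' = p 3 + p 4
      omega
    · show b' + c' = p 4 + p 5
      omega
  · obtain ⟨a', b', c', ha, hb, hc, hne, s1, s2⟩ :=
      winMove (p 1) (p 2) (p 3) (p 4) (p 5) (p 0)
        hd.1 hd.2.1 hd.2.2.1 hd.2.2.2.1 hd.2.2.2.2
    refine ⟨_, mkMove p 1 a' b' c' ha hb hc hne, ?_, ?_⟩
    · show p 0 + a' = c' + p 4
      omega
    · show a' + b' = p 4 + p 5
      omega
  · obtain ⟨a', b', c', ha, hb, hc, hne, s1, s2⟩ :=
      winMove (p 2) (p 3) (p 4) (p 5) (p 0) (p 1)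
        hd.1 hd.2.1 hd.2.2.1 hd.2.2.2.1 hd.2.2.2.2
    refine ⟨_, mkMove p 2 a' b' c' ha hb hc hne, ?_, ?_⟩
    · show p 0 + p 1 = b' + c'
      omega
    · show p 1 + a' = c' + p 5
      omega
  · obtain ⟨a', b', c', ha, hb, hc, hne, s1, s2⟩ :=
      winMove (p 3) (p 4) (p 5) (p 0) (p 1) (p 2)
        hd.1 hd.2.1 hd.2.2.1 hd.2.2.2.1 hd.2.2.2.2
    refine ⟨_, mkMove p 3 a' b' c' ha hb hc hne, ?_, ?_⟩
    · show p 0 + p 1 = a' + b'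
      omega
    · show p 1 + p 2 = b' + c'
      omega
  · obtain ⟨a', b', c', ha, hb, hc, hne, s1, s2⟩ :=
      winMove (p 4) (p 5) (p 0) (p 1) (p 2) (p 3)
        hd.1 hd.2.1 hd.2.2.1 hd.2.2.2.1 hd.2.2.2.2
    refine ⟨_, mkMove p 4 a' b' c' ha hb hc hne, ?_, ?_⟩
    · show c' + p 1 = p 3 + a'
      omega
    · show p 1 + p 2 = a' + b'
      omega
  · obtain ⟨a', b', c', ha, hb, hc, hne, s1, s2⟩ :=
      winMove (p 5) (p 0) (p 1) (p 2) (p 3) (p 4)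
        hd.1 hd.2.1 hd.2.2.1 hd.2.2.2.1 hd.2.2.2.2
    refine ⟨_, mkMove p 5 a' b' c' ha hb hc hne, ?_, ?_⟩
    · show b' + c' = p 3 + p 4
      omega
    · show c' + p 2 = p 4 + a'
      omega

private lemma movedFromE {p q : Fin 6 → ℕ}
    (hE1 : p 0 + p 1 = p 3 + p 4) (hE2 : p 1 + p 2 = p 4 + p 5)
    (h : Move CN63 p q) :
    ¬ (q 0 + q 1 = q 3 + q 4 ∧ q 1 + q 2 = q 4 + q 5) := by
  rintro ⟨hq1, hq2⟩
  obtain ⟨hne, hle, s, ⟨i, rfl⟩, hset⟩ := h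
  have h0 := hle 0; have h1 := hle 1; have h2 := hle 2
  have h3 := hle 3; have h4 := hle 4; have h5 := hle 5
  fin_cases i
  · have hout : ∀ j : Fin 6, q j ≠ p j → j = 0 ∨ j = 1 ∨ j = 2 := by
      intro j hj
      have h' := hset j hj
      simp only [Set.mem_insert_iff, Set.mem_singleton_iff] at h'
      exact h'
    have e3 : q 3 = p 3 := by
      by_contra h'
      rcases hout 3 h' with h'' | h'' | h'' <;> exact absurd h'' (by decide)
    have e4 : q 4 = p 4 := by
      by_contra h'
      rcases hout 4 h' with h'' | h'' | h'' <;> exact absurd h'' (by decide)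
    have e5 : q 5 = p 5 := by
      by_contra h'
      rcases hout 5 h' with h'' | h'' | h'' <;> exact absurd h'' (by decide)
    obtain ⟨j, hj⟩ := Function.ne_iff.mp hne
    rcases hout j hj with rfl | rfl | rfl <;> omega
  · have hout : ∀ j : Fin 6, q j ≠ p j → j = 1 ∨ j = 2 ∨ j = 3 := by
      intro j hj
      have h' := hset j hj
      simp only [Set.mem_insert_iff, Set.mem_singleton_iff] at h'
      exact h'
    have e4 : q 4 = p 4 := by
      by_contra h'
      rcases hout 4 h' with h'' | h'' | h'' <;> exact absurd h'' (by decide)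
    have e5 : q 5 = p 5 := by
      by_contra h'
      rcases hout 5 h' with h'' | h'' | h'' <;> exact absurd h'' (by decide)
    have e0 : q 0 = p 0 := by
      by_contra h'
      rcases hout 0 h' with h'' | h'' | h'' <;> exact absurd h'' (by decide)
    obtain ⟨j, hj⟩ := Function.ne_iff.mp hne
    rcases hout j hj with rfl | rfl | rfl <;> omega
  · have hout : ∀ j : Fin 6, q j ≠ p j → j = 2 ∨ j = 3 ∨ j = 4 := by
      intro j hj
      have h' := hset j hj
      simp only [Set.mem_insert_iff, Set.mem_singleton_iff] at h'
      exact h'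
    have e5 : q 5 = p 5 := by
      by_contra h'
      rcases hout 5 h' with h'' | h'' | h'' <;> exact absurd h'' (by decide)
    have e0 : q 0 = p 0 := by
      by_contra h'
      rcases hout 0 h' with h'' | h'' | h'' <;> exact absurd h'' (by decide)
    have e1 : q 1 = p 1 := by
      by_contra h'
      rcases hout 1 h' with h'' | h'' | h'' <;> exact absurd h'' (by decide)
    obtain ⟨j, hj⟩ := Function.ne_iff.mp hne
    rcases hout j hj with rfl | rfl | rfl <;> omega
  · have hout : ∀ j : Fin 6, q j ≠ p j → j = 3 ∨ j = 4 ∨ j = 5 := by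
      intro j hj
      have h' := hset j hj
      simp only [Set.mem_insert_iff, Set.mem_singleton_iff] at h'
      exact h'
    have e0 : q 0 = p 0 := by
      by_contra h'
      rcases hout 0 h' with h'' | h'' | h'' <;> exact absurd h'' (by decide)
    have e1 : q 1 = p 1 := by
      by_contra h'
      rcases hout 1 h' with h'' | h'' | h'' <;> exact absurd h'' (by decide)
    have e2 : q 2 = p 2 := by
      by_contra h'
      rcases hout 2 h' with h'' | h'' | h'' <;> exact absurd h'' (by decide)
    obtain ⟨j, hj⟩ := Function.ne_iff.mp hne
    rcases hout j hj with rfl | rfl | rfl <;> omega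
  · have hout : ∀ j : Fin 6, q j ≠ p j → j = 4 ∨ j = 5 ∨ j = 0 := by
      intro j hj
      have h' := hset j hj
      simp only [Set.mem_insert_iff, Set.mem_singleton_iff] at h'
      exact h'
    have e1 : q 1 = p 1 := by
      by_contra h'
      rcases hout 1 h' with h'' | h'' | h'' <;> exact absurd h'' (by decide)
    have e2 : q 2 = p 2 := by
      by_contra h'
      rcases hout 2 h' with h'' | h'' | h'' <;> exact absurd h'' (by decide)
    have e3 : q 3 = p 3 := by
      by_contra h'
      rcases hout 3 h' with h'' | h'' | h'' <;> exact absurd h'' (by decide)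
    obtain ⟨j, hj⟩ := Function.ne_iff.mp hne
    rcases hout j hj with rfl | rfl | rfl <;> omega
  · have hout : ∀ j : Fin 6, q j ≠ p j → j = 5 ∨ j = 0 ∨ j = 1 := by
      intro j hj
      have h' := hset j hj
      simp only [Set.mem_insert_iff, Set.mem_singleton_iff] at h'
      exact h'
    have e2 : q 2 = p 2 := by
      by_contra h'
      rcases hout 2 h' with h'' | h'' | h'' <;> exact absurd h'' (by decide)
    have e3 : q 3 = p 3 := by
      by_contra h'
      rcases hout 3 h' with h'' | h'' | h'' <;> exact absurd h'' (by decide)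
    have e4 : q 4 = p 4 := by
      by_contra h'
      rcases hout 4 h' with h'' | h'' | h'' <;> exact absurd h'' (by decide)
    obtain ⟨j, hj⟩ := Function.ne_iff.mp hne
    rcases hout j hj with rfl | rfl | rfl <;> omega

/-- the P-positions of CN(6,3) are exactly the positions
(a,b,c,d,e,f) with a+b = d+e and b+c = e+f. -/
theorem cn63_ppos (p : Fin 6 → ℕ) :
    PPos CN63 p ↔ p 0 + p 1 = p 3 + p 4 ∧ p 1 + p 2 = p 4 + p 5 := by
  suffices H : ∀ n (p : Fin 6 → ℕ), Finset.univ.sum p = n →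
      (PPos CN63 p ↔ p 0 + p 1 = p 3 + p 4 ∧ p 1 + p 2 = p 4 + p 5) from H _ p rfl
  intro n
  induction n using Nat.strong_induction_on with
  | _ n ih =>
    intro p hp
    rw [PPos]
    constructor
    · intro hall
      by_contra hE
      obtain ⟨q, hmv, hq⟩ := existsWin hE
      exact hall q hmv ((ih _ (hp ▸ move_sum_lt hmv) q rfl).mpr hq)
    · rintro ⟨hE1, hE2⟩ q hmv hq
      exact movedFromE hE1 hE2 hmv ((ih _ (hp ▸ move_sum_lt hmv) q rfl).mp hq)
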